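/- Let ρ ∈ Matrix (Fin d) (Fin d) ℂ be positive definite with trace 1, and let A be a measurement with n outcomes on ℂ^d all of whose effects are nonzero. Then A is informationally complete, i.e., Submodule.span ℂ (Set.range A) = ⊤ in Matrix (Fin d) (Fin d) ℂ, if and only if the d² × d² matrix F_ρ(A) is invertible (IsUnit (F_ρ(A))). -/

import Mathlib

open Matrix
open scoped Kronecker ComplexOrder

noncomputable section

/-- A measurement (POVM): a finite family of positive semidefinite matrices summing to `1`. -/
def IsMeasurement {ι κ : Type*} [Fintype ι] [DecidableEq ι] [Fintype κ]
    (A : κ → Matrix ι ι ℂ) : Prop :=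
  (∀ x, (A x).PosSemidef) ∧ ∑ x, A x = 1

/-- `A` is a post-processing of `B`: `A ⪯ B`. -/
def PostProc {ι : Type*} {n m : ℕ}
    (A : Fin n → Matrix ι ι ℂ) (B : Fin m → Matrix ι ι ℂ) : Prop :=
  ∃ μ : Fin n → Fin m → ℝ,
    (∀ x y, 0 ≤ μ x y) ∧ (∀ y, ∑ x, μ x y = 1) ∧
    (∀ x, A x = ∑ y, (μ x y : ℂ) • B y)

/-- The outer product `|E⟩⟨F|` of the vectorizations of two matrices. -/
def outerProd {ι : Type*} (E F : Matrix ι ι ℂ) : Matrix (ι × ι) (ι × ι) ℂ :=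
  Matrix.of fun p q => E p.1 p.2 * star (F q.1 q.2)

/-- The (un-normalized) Fisher information map of a measurement. -/
noncomputable def Fisher {ι κ : Type*} [Fintype ι] [Fintype κ]
    (A : κ → Matrix ι ι ℂ) : Matrix (ι × ι) (ι × ι) ℂ :=
  ∑ x, (Matrix.trace (A x))⁻¹ • outerProd (A x) (A x)

/-- The generalized Fisher information map of a measurement, relative to a
positive definite state `ρ` (with positive semidefinite square root `ρ^{1/2}`). -/
noncomputable def FisherRho {ι κ : Type*} [Fintype ι] [DecidableEq ι] [Fintype κ]
    {ρ : Matrix ι ι ℂ} (hρ : ρ.PosDef) (A : κ → Matrix ι ι ℂ) :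
    Matrix (ι × ι) (ι × ι) ℂ :=
  ∑ x, (Matrix.trace (ρ * A x))⁻¹ •
    outerProd ((hρ.posSemidef.1.eigenvectorUnitary : Matrix ι ι ℂ) *
        diagonal ((↑) ∘ Real.sqrt ∘ hρ.posSemidef.1.eigenvalues) *
        (star hρ.posSemidef.1.eigenvectorUnitary : Matrix ι ι ℂ) * A x)
      ((hρ.posSemidef.1.eigenvectorUnitary : Matrix ι ι ℂ) *
        diagonal ((↑) ∘ Real.sqrt ∘ hρ.posSemidef.1.eigenvalues) *
        (star hρ.posSemidef.1.eigenvectorUnitary : Matrix ι ι ℂ) * A x)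

/-- The height of a finite family of self-adjoint matrices: the infimum of the traces of
Hermitian matrices dominating every member in the Loewner order. -/
noncomputable def height {ι κ : Type*} [Fintype ι] [Fintype κ]
    (X : κ → Matrix ι ι ℂ) : ℝ :=
  sInf { t : ℝ | ∃ H : Matrix ι ι ℂ, H.IsHermitian ∧
    (∀ i, (H - X i).PosSemidef) ∧ t = (Matrix.trace H).re }
namespace ICAux

variable {d n : ℕ}

/-- vectorization equivalence -/
def vecE (d : ℕ) : Matrix (Fin d) (Fin d) ℂ ≃ₗ[ℂ] (Fin d × Fin d → ℂ) where
  toFun M p := M p.1 p.2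
  invFun v := Matrix.of fun i j => v (i, j)
  map_add' _ _ := rfl
  map_smul' _ _ := rfl
  left_inv _ := rfl
  right_inv _ := rfl

/-- left multiplication by a unit, as a linear equivalence -/
def mulLeftE {S : Matrix (Fin d) (Fin d) ℂ} (hS : IsUnit S) :
    Matrix (Fin d) (Fin d) ℂ ≃ₗ[ℂ] Matrix (Fin d) (Fin d) ℂ where
  toFun X := S * X
  invFun X := (↑hS.unit⁻¹ : Matrix (Fin d) (Fin d) ℂ) * X
  map_add' _ _ := mul_add _ _ _
  map_smul' _ _ := (mul_smul_comm _ _ _)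
  left_inv X := by
    show (↑hS.unit⁻¹ : Matrix (Fin d) (Fin d) ℂ) * (S * X) = X
    rw [← mul_assoc, hS.val_inv_mul, one_mul]
  right_inv X := by
    show S * ((↑hS.unit⁻¹ : Matrix (Fin d) (Fin d) ℂ) * X) = X
    rw [← mul_assoc, hS.mul_val_inv, one_mul]

lemma mulVec_outerProd (E F : Matrix (Fin d) (Fin d) ℂ) (v : Fin d × Fin d → ℂ) :
    outerProd E F *ᵥ v = (star (vecE d F) ⬝ᵥ v) • vecE d E := by
  funext p
  simp only [outerProd, mulVec, dotProduct, Pi.smul_apply, smul_eq_mul, of_apply,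
    Pi.star_apply, vecE, LinearEquiv.coe_mk]
  rw [Finset.sum_mul]
  exact Finset.sum_congr rfl fun q _ => by show _ = star (F q.1 q.2) * v q * E p.1 p.2; ring

lemma star_dot_comm (v w : Fin d × Fin d → ℂ) :
    star v ⬝ᵥ w = star (star w ⬝ᵥ v) := by
  simp only [dotProduct, star_sum, star_mul', star_star, Pi.star_apply]
  exact Finset.sum_congr rfl fun q _ => mul_comm _ _

lemma sum_mulVec {κ : Type*} [Fintype κ] (M : κ → Matrix (Fin d × Fin d) (Fin d × Fin d) ℂ)
    (v : Fin d × Fin d → ℂ) : (∑ x, M x) *ᵥ v = ∑ x, M x *ᵥ v := by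
  funext p
  simp [mulVec, dotProduct, Matrix.sum_apply, Finset.sum_mul]
  rw [Finset.sum_comm]

lemma dot_sum {κ : Type*} [Fintype κ] (u : Fin d × Fin d → ℂ) (f : κ → (Fin d × Fin d → ℂ)) :
    u ⬝ᵥ (∑ x, f x) = ∑ x, u ⬝ᵥ f x := by
  simp [dotProduct, Finset.mul_sum, Finset.sum_apply]
  rw [Finset.sum_comm]

variable {ρ : Matrix (Fin d) (Fin d) ℂ}

/-- square root of a positive semidefinite matrix -/
def psqrt {Q : Matrix (Fin d) (Fin d) ℂ} (hQ : Q.PosSemidef) : Matrix (Fin d) (Fin d) ℂ :=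
  (hQ.1.eigenvectorUnitary : Matrix (Fin d) (Fin d) ℂ) *
    diagonal ((↑) ∘ Real.sqrt ∘ hQ.1.eigenvalues) *
    (star hQ.1.eigenvectorUnitary : Matrix (Fin d) (Fin d) ℂ)

lemma psqrt_mul_self {Q : Matrix (Fin d) (Fin d) ℂ} (hQ : Q.PosSemidef) :
    psqrt hQ * psqrt hQ = Q := by
  have hU : (star hQ.1.eigenvectorUnitary : Matrix (Fin d) (Fin d) ℂ) *
      (hQ.1.eigenvectorUnitary : Matrix (Fin d) (Fin d) ℂ) = 1 := Unitary.coe_star_mul_self _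
  have hD : diagonal ((↑) ∘ Real.sqrt ∘ hQ.1.eigenvalues : Fin d → ℂ) *
      diagonal ((↑) ∘ Real.sqrt ∘ hQ.1.eigenvalues) =
      diagonal (RCLike.ofReal ∘ hQ.1.eigenvalues) := by
    rw [diagonal_mul_diagonal]
    congr 1
    funext i
    simp only [Function.comp]
    rw [← Complex.ofReal_mul, Real.mul_self_sqrt (hQ.eigenvalues_nonneg i)]
    rfl
  unfold psqrt
  conv_rhs => rw [hQ.1.spectral_theorem, Unitary.conjStarAlgAut_apply]
  rw [← hD]
  simp only [mul_assoc]
  rw [← mul_assoc (star _ : Matrix (Fin d) (Fin d) ℂ) _ (_ * _), hU, one_mul]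

lemma psqrt_herm {Q : Matrix (Fin d) (Fin d) ℂ} (hQ : Q.PosSemidef) :
    (psqrt hQ)ᴴ = psqrt hQ := by
  unfold psqrt
  simp [conjTranspose_mul, diagonal_conjTranspose, mul_assoc, ← star_eq_conjTranspose]
  rw [star_eq_conjTranspose, diagonal_conjTranspose]
  congr 3
  funext i
  simp

lemma sqrt_isUnit (hρ : ρ.PosDef) : IsUnit (psqrt hρ.posSemidef) := by
  rw [isUnit_iff_isUnit_det]
  have h : det (psqrt hρ.posSemidef) * det (psqrt hρ.posSemidef) = det ρ := by
    rw [← det_mul, psqrt_mul_self hρ.posSemidef]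
  have : det (psqrt hρ.posSemidef) ≠ 0 := fun h0 => hρ.det_pos.ne' (by rw [← h, h0, mul_zero])
  exact this.isUnit

lemma trace_rho_pos (hρ : ρ.PosDef) {Q : Matrix (Fin d) (Fin d) ℂ}
    (hQ : Q.PosSemidef) (hQ0 : Q ≠ 0) :
    ∃ t : ℝ, 0 < t ∧ Matrix.trace (ρ * Q) = (t : ℂ) := by
  set S := psqrt hρ.posSemidef with hSdef
  have hSS : S * S = ρ := psqrt_mul_self hρ.posSemidef
  have hSh : Sᴴ = S := psqrt_herm hρ.posSemidef
  set C := psqrt hQ with hCdef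
  have hCC : C * C = Q := psqrt_mul_self hQ
  have hCh : Cᴴ = C := psqrt_herm hQ
  set N := C * S with hNdef
  have hN : Nᴴ * N = S * (C * (C * S)) := by
    rw [hNdef, conjTranspose_mul, hSh, hCh]
    noncomm_ring
  have htr : Matrix.trace (ρ * Q) = Matrix.trace (Nᴴ * N) := by
    rw [hN, ← hSS, ← hCC, mul_assoc, trace_mul_comm, mul_assoc, mul_assoc]
  have hNne : N ≠ 0 := by
    intro h0
    apply hQ0
    have hC0 : C = 0 := (sqrt_isUnit hρ).mul_right_cancel (by rw [← hNdef, h0, zero_mul])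
    rw [← hCC, hC0, mul_zero]
  refine ⟨∑ j, ∑ i, Complex.normSq (N i j), ?_, ?_⟩
  · obtain ⟨i, j, hij⟩ : ∃ i j, N i j ≠ 0 := by
      by_contra h
      push_neg at h
      exact hNne (by ext i j; exact h i j)
    refine Finset.sum_pos' (fun j _ => Finset.sum_nonneg fun i _ => Complex.normSq_nonneg _)
      ⟨j, Finset.mem_univ _, Finset.sum_pos' (fun i _ => Complex.normSq_nonneg _)
        ⟨i, Finset.mem_univ _, Complex.normSq_pos.2 hij⟩⟩
  · rw [htr]
    simp only [Matrix.trace, diag_apply, mul_apply, conjTranspose_apply]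
    push_cast
    refine Finset.sum_congr rfl fun j _ => Finset.sum_congr rfl fun i _ => ?_
    rw [Complex.star_def, Complex.normSq_eq_conj_mul_self]

end ICAux

open ICAux

/-- A measurement is informationally complete iff its generalized Fisher information
matrix is invertible. -/
theorem stmt12 {d n : ℕ} {ρ : Matrix (Fin d) (Fin d) ℂ} (hρ : ρ.PosDef)
    (hρtr : Matrix.trace ρ = 1)
    (A : Fin n → Matrix (Fin d) (Fin d) ℂ) (hA : IsMeasurement A) (hA0 : ∀ x, A x ≠ 0) :
    Submodule.span ℂ (Set.range A) = ⊤ ↔ IsUnit (FisherRho hρ A) := by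
  classical
  set S := psqrt hρ.posSemidef with hSdef
  have hSu : IsUnit S := sqrt_isUnit hρ
  set B : Fin n → Matrix (Fin d) (Fin d) ℂ := fun x => S * A x with hBdef
  choose t ht1 ht2 using fun x => trace_rho_pos hρ (hA.1 x) (hA0 x)
  -- the linear equivalence X ↦ vec (S * X)
  set e : Matrix (Fin d) (Fin d) ℂ ≃ₗ[ℂ] (Fin d × Fin d → ℂ) :=
    (mulLeftE hSu).trans (vecE d) with hedef
  have he : ∀ x, e (A x) = vecE d (B x) := fun x => rfl
  -- span equivalence
  have hspan_iff : Submodule.span ℂ (Set.range A) = ⊤ ↔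
      Submodule.span ℂ (Set.range fun x => vecE d (B x)) = ⊤ := by
    have h1 : (Set.range fun x => vecE d (B x)) = ⇑e '' Set.range A := by
      rw [← Set.range_comp]
      rfl
    rw [h1, ← LinearEquiv.coe_coe, ← Submodule.map_span]
    have hr : LinearMap.range (e : Matrix (Fin d) (Fin d) ℂ →ₗ[ℂ] (Fin d × Fin d → ℂ)) = ⊤ :=
      LinearEquiv.range e
    have hk : LinearMap.ker (e : Matrix (Fin d) (Fin d) ℂ →ₗ[ℂ] (Fin d × Fin d → ℂ)) = ⊥ :=
      LinearEquiv.ker e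
    rw [LinearMap.map_eq_top_iff hr, hk, sup_bot_eq]
  -- mulVec formula
  have hMv : ∀ v, FisherRho hρ A *ᵥ v =
      ∑ x, (((t x : ℂ))⁻¹ * (star (vecE d (B x)) ⬝ᵥ v)) • vecE d (B x) := by
    intro v
    rw [FisherRho, ICAux.sum_mulVec]
    refine Finset.sum_congr rfl fun x _ => ?_
    rw [smul_mulVec, mulVec_outerProd, ht2, smul_smul]
    rfl
  constructor
  · intro hspan
    rw [← Matrix.mulVec_injective_iff_isUnit]
    have hker : ∀ v, FisherRho hρ A *ᵥ v = 0 → v = 0 := by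
      intro v hv
      set s : Fin n → ℂ := fun x => star (vecE d (B x)) ⬝ᵥ v with hsdef
      have h0 : (0 : ℂ) = ∑ x, ((t x : ℂ))⁻¹ * (s x * star (s x)) := by
        have := congrArg (fun w => star v ⬝ᵥ w) hv
        simp only [dotProduct_zero] at this
        rw [hMv v, dot_sum] at this
        rw [← this]
        refine Finset.sum_congr rfl fun x _ => ?_
        rw [dotProduct_smul, smul_eq_mul, star_dot_comm v (vecE d (B x)), mul_assoc]
      have h0' : (0 : ℝ) = ∑ x, (t x)⁻¹ * Complex.normSq (s x) := by
        have : ∀ x, ((t x : ℂ))⁻¹ * (s x * star (s x)) =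
            (((t x)⁻¹ * Complex.normSq (s x) : ℝ) : ℂ) := by
          intro x
          rw [Complex.star_def, Complex.mul_conj]
          push_cast
          ring
        rw [Finset.sum_congr rfl fun x _ => this x, ← Complex.ofReal_sum] at h0
        exact_mod_cast h0
      have hs0 : ∀ x, s x = 0 := by
        intro x
        have := (Finset.sum_eq_zero_iff_of_nonneg
          (fun x _ => mul_nonneg (inv_nonneg.2 (ht1 x).le) (Complex.normSq_nonneg _))).1
          h0'.symm x (Finset.mem_univ x)
        have hns : Complex.normSq (s x) = 0 := by
          rcases mul_eq_zero.1 this with h | h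
          · exact absurd h (inv_ne_zero (ht1 x).ne')
          · exact h
        exact Complex.normSq_eq_zero.1 hns
      -- orthogonality submodule
      set W : Submodule ℂ (Fin d × Fin d → ℂ) :=
        { carrier := {w | star w ⬝ᵥ v = 0}
          add_mem' := fun {a b} ha hb => by
            simp only [Set.mem_setOf_eq] at *
            rw [star_add, add_dotProduct, ha, hb, add_zero]
          zero_mem' := by simp
          smul_mem' := fun c w hw => by
            simp only [Set.mem_setOf_eq] at *
            rw [star_smul, smul_dotProduct, hw, smul_zero] } with hWdef
      have hle : Submodule.span ℂ (Set.range fun x => vecE d (B x)) ≤ W := by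
        rw [Submodule.span_le]
        rintro _ ⟨x, rfl⟩
        exact hs0 x
      have hWtop : W = ⊤ := top_unique ((hspan_iff.1 hspan) ▸ hle)
      have : ∀ q, v q = 0 := by
        intro q
        have hq : (Pi.single q (1:ℂ) : Fin d × Fin d → ℂ) ∈ W := hWtop ▸ Submodule.mem_top
        have : star (Pi.single q (1:ℂ) : Fin d × Fin d → ℂ) ⬝ᵥ v = 0 := hq
        have h1 : star (Pi.single q (1:ℂ) : Fin d × Fin d → ℂ) = Pi.single q 1 := by
          rw [← Pi.single_star, star_one]
        rwa [h1, single_dotProduct, one_mul] at this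
      funext q
      exact this q
    intro a b hab
    have : FisherRho hρ A *ᵥ (a - b) = 0 := by
      rw [mulVec_sub, hab, sub_self]
    have := hker _ this
    exact sub_eq_zero.1 this
  · intro hU
    have hsurj := Matrix.mulVec_surjective_iff_isUnit.2 hU
    apply hspan_iff.2
    refine le_antisymm le_top ?_
    intro u _
    obtain ⟨v, hv⟩ := hsurj u
    rw [← hv, hMv v]
    exact Submodule.sum_mem _ fun x _ =>
      Submodule.smul_mem _ _ (Submodule.subset_span ⟨x, rfl⟩)
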